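/- Let π be a continuous piecewise linear minimal valid function, and let π̄ : ℝ → ℝ be a Lipschitz continuous function such that π̄(0) = 0, π̄(f) = 0, π̄(x) + π̄(y) = π̄(x+y) for all (x,y) ∈ E(π), and π̄(x + t) = π̄(x) for all x ∈ ℝ and t ∈ ℤ. Then there exists ε > 0 such that both π + ε·π̄ and π − ε·π̄ are minimal valid functions. -/

import Mathlib

/-- A finite-support function `y : ℝ → ℕ` is feasible if `∑ r, r·y(r) − f ∈ ℤ`. -/
def Feasible (f : ℝ) (y : ℝ →₀ ℕ) : Prop :=
  ∃ z : ℤ, (∑ r ∈ y.support, r * (y r : ℝ)) - f = (z : ℝ)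

/-- `π` is a valid function: nonnegative, and `∑ r, π(r)·y(r) ≥ 1` for every feasible `y`. -/
def Valid (f : ℝ) (π : ℝ → ℝ) : Prop :=
  (∀ x, 0 ≤ π x) ∧
    ∀ y : ℝ →₀ ℕ, Feasible f y → 1 ≤ ∑ r ∈ y.support, π r * (y r : ℝ)

/-- A valid function is minimal if no other valid function is pointwise ≤ it. -/
def MinimalValid (f : ℝ) (π : ℝ → ℝ) : Prop :=
  Valid f π ∧ ¬ ∃ π' : ℝ → ℝ, Valid f π' ∧ (∀ x, π' x ≤ π x) ∧ π' ≠ π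

/-- `P(π)`: the set of feasible `y` with `∑ r, π(r)·y(r) = 1`. -/
def Pset (f : ℝ) (π : ℝ → ℝ) : Set (ℝ →₀ ℕ) :=
  {y | Feasible f y ∧ ∑ r ∈ y.support, π r * (y r : ℝ) = 1}

/-- `E(π) = {(x,y) : π(x) + π(y) = π(x+y)}`. -/
def Eset (π : ℝ → ℝ) : Set (ℝ × ℝ) :=
  {p | π p.1 + π p.2 = π (p.1 + p.2)}

/-- A valid function `π` is a facet if every valid `π'` with `P(π) ⊆ P(π')` equals `π`. -/
def IsFacet (f : ℝ) (π : ℝ → ℝ) : Prop :=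
  Valid f π ∧ ∀ π' : ℝ → ℝ, Valid f π' → Pset f π ⊆ Pset f π' → π' = π

/-- A valid function `π` is a weak facet if every valid `π'` with `P(π) ⊆ P(π')`
has `P(π) = P(π')`. -/
def IsWeakFacet (f : ℝ) (π : ℝ → ℝ) : Prop :=
  Valid f π ∧ ∀ π' : ℝ → ℝ, Valid f π' → Pset f π ⊆ Pset f π' → Pset f π = Pset f π'

/-- A valid function `π` is extreme if whenever `π = (π¹ + π²)/2` with `π¹, π²` valid,
then `π¹ = π² = π`. -/
def ExtremeFunc (f : ℝ) (π : ℝ → ℝ) : Prop :=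
  Valid f π ∧ ∀ π₁ π₂ : ℝ → ℝ, Valid f π₁ → Valid f π₂ →
    (∀ x, π x = (π₁ x + π₂ x) / 2) → π₁ = π ∧ π₂ = π

/-- `π` is piecewise linear: there is a closed, discrete set `B ⊆ ℝ` of breakpoints
such that `π` is affine on each connected component of `ℝ \ B`. -/
def PiecewiseLinear (π : ℝ → ℝ) : Prop :=
  ∃ B : Set ℝ, IsClosed B ∧
    (∀ x ∈ B, ∃ ε > (0 : ℝ), ∀ y ∈ B, |y - x| < ε → y = x) ∧
    (∀ x ∉ B, ∃ a b : ℝ, ∀ z ∈ connectedComponentIn Bᶜ x, π z = a * z + b)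

/-- `π` is continuous piecewise linear. -/
def ContPiecewiseLinear (π : ℝ → ℝ) : Prop :=
  PiecewiseLinear π ∧ Continuous π


set_option maxHeartbeats 1000000

open Finsupp
noncomputable section
def Wt (y : ℝ →₀ ℕ) : ℝ := ∑ r ∈ y.support, r * (y r : ℝ)
def Cost (π : ℝ → ℝ) (y : ℝ →₀ ℕ) : ℝ := ∑ r ∈ y.support, π r * (y r : ℝ)
lemma cost_eq_sum (π : ℝ → ℝ) (y : ℝ →₀ ℕ) : Cost π y = y.sum (fun r k => π r * (k:ℝ)) := rfl
lemma cost_add (π : ℝ → ℝ) (y z : ℝ →₀ ℕ) : Cost π (y + z) = Cost π y + Cost π z := by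
  simp only [cost_eq_sum]
  apply Finsupp.sum_add_index' (by simp) (by intros; push_cast; ring)
lemma cost_single (π : ℝ → ℝ) (r : ℝ) (k : ℕ) : Cost π (Finsupp.single r k) = π r * k := by
  rw [cost_eq_sum]; exact Finsupp.sum_single_index (by simp)
lemma cost_nsmul (π : ℝ → ℝ) (n : ℕ) (y : ℝ →₀ ℕ) : Cost π (n • y) = n * Cost π y := by
  induction n with
  | zero => simp [Cost]
  | succ m ih => rw [succ_nsmul, cost_add, ih]; push_cast; ring
lemma cost_nonneg {π : ℝ → ℝ} (h : ∀ x, 0 ≤ π x) (y : ℝ →₀ ℕ) : 0 ≤ Cost π y :=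
  Finset.sum_nonneg (fun r _ => mul_nonneg (h r) (by positivity))
lemma cost_congr {π π' : ℝ → ℝ} (y : ℝ →₀ ℕ) (h : ∀ r ∈ y.support, π r = π' r) :
    Cost π y = Cost π' y := Finset.sum_congr rfl (fun r hr => by rw [h r hr])
lemma wt_eq_sum (y : ℝ →₀ ℕ) : Wt y = y.sum (fun r k => r * (k:ℝ)) := rfl
lemma wt_add (y z : ℝ →₀ ℕ) : Wt (y + z) = Wt y + Wt z := by
  simp only [wt_eq_sum]
  apply Finsupp.sum_add_index' (by simp) (by intros; push_cast; ring)
lemma wt_single (r : ℝ) (k : ℕ) : Wt (Finsupp.single r k) = r * k := by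
  rw [wt_eq_sum]; exact Finsupp.sum_single_index (by simp)
lemma wt_nsmul (n : ℕ) (y : ℝ →₀ ℕ) : Wt (n • y) = n * Wt y := by
  induction n with
  | zero => simp [Wt]
  | succ m ih => rw [succ_nsmul, wt_add, ih]; push_cast; ring

lemma feasible_iff (f : ℝ) (y : ℝ →₀ ℕ) : Feasible f y ↔ ∃ z : ℤ, Wt y - f = (z:ℝ) := Iff.rfl
lemma valid_iff (f : ℝ) (π : ℝ → ℝ) :
    Valid f π ↔ ((∀ x, 0 ≤ π x) ∧ ∀ y, Feasible f y → 1 ≤ Cost π y) := Iff.rfl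

/-- Master lemma: a minimal valid function is dominated by the cost of any
representation congruent to `c` mod 1. -/
lemma master {f : ℝ} {π : ℝ → ℝ} (hπ : MinimalValid f π) (c : ℝ) (g : ℝ →₀ ℕ) (m : ℤ)
    (hw : Wt g = c + m) : π c ≤ Cost π g := by
  by_contra hlt
  push_neg at hlt
  set π' : ℝ → ℝ := Function.update π c (Cost π g) with hπ'
  have hπ'c : π' c = Cost π g := Function.update_self _ _ _
  have hπ'ne : ∀ r, r ≠ c → π' r = π r := fun r hr => Function.update_of_ne hr _ _
  apply hπ.2
  refine ⟨π', ⟨fun x => ?_, fun y hy => ?_⟩, fun x => ?_, fun he => ?_⟩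
  · rcases eq_or_ne x c with rfl | hx
    · rw [hπ'c]; exact cost_nonneg hπ.1.1 g
    · rw [hπ'ne x hx]; exact hπ.1.1 x
  · -- validity
    set n := y c with hn
    set y' := y.erase c + n • g with hy'
    have hyd : y.erase c + Finsupp.single c n = y := Finsupp.erase_add_single c y
    have hwy : Wt y = Wt (y.erase c) + c * n := by
      conv_lhs => rw [← hyd]
      rw [wt_add, wt_single]
    obtain ⟨z, hz⟩ := hy
    have hz' : Wt y - f = (z:ℝ) := hz
    have hfeas : Feasible f y' := by
      refine ⟨z + n * m, ?_⟩
      show Wt y' - f = _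
      rw [hy', wt_add, wt_nsmul, hw]
      push_cast
      have : Wt (y.erase c) = Wt y - c * n := by linarith
      rw [this]; linarith
    have h1 : (1:ℝ) ≤ Cost π y' := hπ.1.2 y' hfeas
    have hcy' : Cost π y' = Cost π (y.erase c) + n * Cost π g := by
      rw [hy', cost_add, cost_nsmul]
    have hec : Cost π' (y.erase c) = Cost π (y.erase c) := by
      refine (cost_congr _ (fun r hr => ?_)).symm
      have hr' : r ∈ y.support.erase c := by rwa [Finsupp.support_erase] at hr
      exact (hπ'ne r (Finset.ne_of_mem_erase hr')).symm
    have : Cost π' y = Cost π (y.erase c) + n * Cost π g := by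
      conv_lhs => rw [← hyd]
      rw [cost_add, cost_single, hec, hπ'c]; ring
    show (1:ℝ) ≤ Cost π' y
    rw [← hcy'] at this
    rw [this]; exact h1
  · rcases eq_or_ne x c with rfl | hx
    · rw [hπ'c]; exact le_of_lt hlt
    · rw [hπ'ne x hx]
  · have := congrFun he c
    rw [hπ'c] at this
    exact absurd this (ne_of_lt hlt)

variable {f : ℝ} {π : ℝ → ℝ}

lemma pi_nonneg (hπ : MinimalValid f π) : ∀ x, 0 ≤ π x := hπ.1.1

lemma pi_zero (hπ : MinimalValid f π) : π 0 = 0 := by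
  have h := master hπ 0 0 0 (by simp [Wt])
  simp only [Cost, Finsupp.support_zero, Finset.sum_empty] at h
  exact le_antisymm h (hπ.1.1 0)

lemma pi_subadd (hπ : MinimalValid f π) (x y : ℝ) : π (x + y) ≤ π x + π y := by
  have h := master hπ (x + y) (Finsupp.single x 1 + Finsupp.single y 1) 0 (by
    rw [wt_add, wt_single, wt_single]; push_cast; ring)
  rwa [cost_add, cost_single, cost_single, Nat.cast_one, mul_one, mul_one] at h

lemma pi_periodic (hπ : MinimalValid f π) (x : ℝ) (t : ℤ) : π (x + t) = π x := by
  have h1 := master hπ (x + t) (Finsupp.single x 1) (-t) (by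
    rw [wt_single]; push_cast; ring)
  have h2 := master hπ x (Finsupp.single (x + t) 1) t (by
    rw [wt_single]; push_cast; ring)
  rw [cost_single, Nat.cast_one, mul_one] at h1 h2
  linarith

lemma pi_le_one (hπ : MinimalValid f π) (x : ℝ) : π x ≤ 1 := by
  by_contra hgt
  push_neg at hgt
  apply hπ.2
  refine ⟨fun z => min (π z) 1, ⟨fun z => le_min (hπ.1.1 z) zero_le_one, fun y hy => ?_⟩,
    fun z => min_le_left _ _, fun he => ?_⟩
  · show (1:ℝ) ≤ Cost (fun z => min (π z) 1) y
    by_cases hex : ∃ r ∈ y.support, 1 ≤ π r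
    · obtain ⟨r, hr, hr1⟩ := hex
      have h1 : min (π r) 1 * (y r : ℝ) = (y r : ℝ) := by
        rw [min_eq_right hr1, one_mul]
      have hy1 : (1:ℝ) ≤ (y r : ℝ) := by
        have := Finsupp.mem_support_iff.mp hr
        exact_mod_cast Nat.one_le_iff_ne_zero.mpr this
      calc (1:ℝ) ≤ min (π r) 1 * (y r : ℝ) := by rw [h1]; exact hy1
        _ ≤ Cost (fun z => min (π z) 1) y := by
            apply Finset.single_le_sum (fun i _ => ?_) hr
            exact mul_nonneg (le_min (hπ.1.1 i) zero_le_one) (by positivity)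
    · push_neg at hex
      have : Cost (fun z => min (π z) 1) y = Cost π y := by
        apply cost_congr
        intro r hr
        rw [min_eq_left (le_of_lt (hex r hr))]
      rw [this]
      exact hπ.1.2 y hy
  · have := congrFun he x
    simp only [min_eq_right (le_of_lt hgt)] at this
    · exact absurd this.symm (ne_of_gt hgt)

lemma pi_f_ge (hπ : MinimalValid f π) : 1 ≤ π f := by
  have h := hπ.1.2 (Finsupp.single f 1) ⟨0, by
    show Wt _ - f = _
    rw [wt_single]; push_cast; ring⟩
  have : Cost π (Finsupp.single f 1) = π f := by rw [cost_single]; push_cast; ring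
  rw [← this]; exact h

lemma pi_symm_ge (hπ : MinimalValid f π) (x : ℝ) : 1 ≤ π x + π (f - x) := by
  have h := hπ.1.2 (Finsupp.single x 1 + Finsupp.single (f - x) 1) ⟨0, by
    show Wt _ - f = _
    rw [wt_add, wt_single, wt_single]; push_cast; ring⟩
  have : Cost π (Finsupp.single x 1 + Finsupp.single (f - x) 1) = π x + π (f - x) := by
    rw [cost_add, cost_single, cost_single]; push_cast; ring
  rw [← this]; exact h

lemma pi_symm (hπ : MinimalValid f π) (xb : ℝ) : π xb + π (f - xb) = 1 := by
  classical
  by_contra hne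
  have hgt : 1 < π xb + π (f - xb) := lt_of_le_of_ne (pi_symm_ge hπ xb) (Ne.symm hne)
  set a := π xb with ha
  set b := π (f - xb) with hb
  have hb1 : b ≤ 1 := pi_le_one hπ _
  have ha1 : a ≤ 1 := pi_le_one hπ _
  have ha0 : 0 < a := by linarith
  set δ := a + b - 1 with hδ
  have hδ0 : 0 < δ := by linarith
  set n₀ : ℕ := ⌈2 / a⌉₊ with hn₀def
  have hn₀ : 2 / a ≤ (n₀ : ℝ) := Nat.le_ceil _
  have hn₀pos : 0 < (n₀ : ℝ) := lt_of_lt_of_le (by positivity) hn₀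
  set ε := min (δ / n₀) (a / 2) with hε
  have hε0 : 0 < ε := lt_min (by positivity) (by positivity)
  have hεa : ε ≤ a / 2 := min_le_right _ _
  have hεδ : ε * n₀ ≤ δ := by
    have h1 : ε ≤ δ / n₀ := min_le_left _ _
    calc ε * n₀ ≤ (δ / n₀) * n₀ := by nlinarith
      _ = δ := by field_simp
  set P : ℝ → Prop := fun r => ∃ t : ℤ, r = xb + t with hP
  set π' : ℝ → ℝ := fun r => if P r then π r - ε else π r with hπ'
  have hcoset : ∀ r, P r → π r = a := by
    rintro r ⟨t, rfl⟩
    exact pi_periodic hπ xb t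
  have hsplit : ∀ y : ℝ →₀ ℕ,
      Cost π' y = Cost π y - ε * ∑ r ∈ y.support.filter P, (y r : ℝ) := by
    intro y
    have h1 : Cost π' y
        = ∑ r ∈ y.support, (π r * (y r : ℝ) - if P r then ε * (y r : ℝ) else 0) := by
      apply Finset.sum_congr rfl
      intro r _
      by_cases hr : P r <;> simp [hπ', hr] <;> ring
    rw [h1, Finset.sum_sub_distrib, ← Finset.sum_filter, Finset.mul_sum]
    rfl
  apply hπ.2
  refine ⟨π', ⟨fun r => ?_, fun y hy => ?_⟩, fun r => ?_, fun he => ?_⟩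
  · by_cases hr : P r
    · simp only [hπ', if_pos hr, hcoset r hr]; linarith
    · simp only [hπ', if_neg hr]; exact hπ.1.1 r
  · -- validity
    show (1:ℝ) ≤ Cost π' y
    set N := ∑ r ∈ y.support.filter P, (y r : ℝ) with hN
    have hNnn : 0 ≤ N := Finset.sum_nonneg (fun i _ => by positivity)
    have hCy : (1:ℝ) ≤ Cost π y := hπ.1.2 y hy
    rcases eq_or_lt_of_le hNnn with hN0 | hNpos
    · rw [hsplit, ← hN, ← hN0]; linarith
    · -- some coset element in support
      have hex : ∃ r₀ ∈ y.support.filter P, (y r₀ : ℝ) ≠ 0 := by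
        by_contra hc
        push_neg at hc
        have : N = 0 := Finset.sum_eq_zero hc
        exact absurd this (ne_of_gt hNpos)
      obtain ⟨r₀, hr₀mem, _⟩ := hex
      have hr₀supp : r₀ ∈ y.support := (Finset.mem_filter.mp hr₀mem).1
      have hr₀P : P r₀ := (Finset.mem_filter.mp hr₀mem).2
      obtain ⟨t₀, ht₀⟩ := hr₀P
      have hyr₀ : y r₀ ≠ 0 := Finsupp.mem_support_iff.mp hr₀supp
      -- decompose y
      obtain ⟨y'', hdec⟩ : ∃ y'', y'' + Finsupp.single r₀ 1 = y := by
        refine ⟨y.erase r₀ + Finsupp.single r₀ (y r₀ - 1), ?_⟩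
        rw [add_assoc, ← Finsupp.single_add, Nat.sub_add_cancel (Nat.one_le_iff_ne_zero.mpr hyr₀)]
        exact Finsupp.erase_add_single r₀ y
      obtain ⟨z, hz⟩ := hy
      have hz' : Wt y - f = (z : ℝ) := hz
      have hwts : Wt y'' + r₀ = Wt y := by
        rw [← hdec, wt_add, wt_single]; push_cast; ring
      have hmaster : π (f - xb) ≤ Cost π y'' := by
        apply master hπ (f - xb) y'' (z - t₀)
        rw [ht₀] at hwts
        push_cast
        linarith
      have hcosts : Cost π y = Cost π y'' + a := by
        rw [← hdec, cost_add, cost_single, hcoset r₀ ⟨t₀, ht₀⟩]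
        push_cast; ring
      have hclaim1 : 1 + δ ≤ Cost π y := by
        rw [hcosts]; rw [← hb] at hmaster; linarith
      rw [hsplit, ← hN]
      by_cases hcase : N ≤ (n₀ : ℝ)
      · have : ε * N ≤ ε * n₀ := by nlinarith
        linarith
      · push_neg at hcase
        have hlow : a * N ≤ Cost π y := by
          have h1 : ∑ r ∈ y.support.filter P, π r * (y r : ℝ) ≤ Cost π y := by
            apply Finset.sum_le_sum_of_subset_of_nonneg (Finset.filter_subset _ _)
            intro i hi _
            exact mul_nonneg (hπ.1.1 i) (by positivity)
          have h2 : ∑ r ∈ y.support.filter P, π r * (y r : ℝ) = a * N := by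
            rw [hN, Finset.mul_sum]
            apply Finset.sum_congr rfl
            intro r hr
            rw [hcoset r (Finset.mem_filter.mp hr).2]
          linarith
        have h2a : 2 / a ≤ N := le_trans hn₀ (le_of_lt hcase)
        have : (1:ℝ) ≤ (a/2) * N := by
          calc (1:ℝ) = (a/2) * (2/a) := by field_simp
            _ ≤ (a/2) * N := by nlinarith
        nlinarith
  · by_cases hr : P r
    · simp only [hπ', if_pos hr]; linarith
    · simp only [hπ', if_neg hr]; exact le_rfl
  · have h1 := congrFun he xb
    have h2 : P xb := ⟨0, by simp⟩
    simp only [hπ', if_pos h2] at h1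
    linarith

lemma pi_f_eq (hπ : MinimalValid f π) : π f = 1 := le_antisymm (pi_le_one hπ f) (pi_f_ge hπ)

lemma valid_symm_ge {π' : ℝ → ℝ} (hv : Valid f π') (x : ℝ) : 1 ≤ π' x + π' (f - x) := by
  have h := hv.2 (Finsupp.single x 1 + Finsupp.single (f - x) 1) ⟨0, by
    show Wt _ - f = _
    rw [wt_add, wt_single, wt_single]; push_cast; ring⟩
  have heq : Cost π' (Finsupp.single x 1 + Finsupp.single (f - x) 1) = π' x + π' (f - x) := by
    rw [cost_add, cost_single, cost_single]; push_cast; ring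
  rw [← heq]; exact h

lemma pi_mul_nat {π : ℝ → ℝ} (h0 : π 0 = 0) (hsub : ∀ x y, π (x + y) ≤ π x + π y) (x : ℝ) :
    ∀ k : ℕ, π (x * k) ≤ k * π x := by
  intro k
  induction k with
  | zero => simp [h0]
  | succ m ih =>
    have he : x * ((m + 1 : ℕ) : ℝ) = x * m + x := by push_cast; ring
    rw [he]
    calc π (x * m + x) ≤ π (x * m) + π x := hsub _ _
      _ ≤ m * π x + π x := by linarith
      _ = ((m + 1 : ℕ) : ℝ) * π x := by push_cast; ring

lemma cost_ge_wt {π : ℝ → ℝ} (h0 : π 0 = 0) (hsub : ∀ x y, π (x + y) ≤ π x + π y)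
    (hnn : ∀ x, 0 ≤ π x) (y : ℝ →₀ ℕ) : π (Wt y) ≤ Cost π y := by
  induction y using Finsupp.induction with
  | zero => simp [Wt, Cost, h0]
  | single_add a b yf ha hb ih =>
    rw [wt_add, cost_add, wt_single, cost_single]
    calc π (a * b + Wt yf) ≤ π (a * b) + π (Wt yf) := hsub _ _
      _ ≤ b * π a + Cost π yf := add_le_add (pi_mul_nat h0 hsub a b) ih
      _ = π a * b + Cost π yf := by ring

lemma minimalValid_of {f : ℝ} {π : ℝ → ℝ} (hnn : ∀ x, 0 ≤ π x) (h0 : π 0 = 0)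
    (hsub : ∀ x y, π (x + y) ≤ π x + π y) (hper : ∀ (x : ℝ) (t : ℤ), π (x + t) = π x)
    (hsym : ∀ x, π x + π (f - x) = 1) : MinimalValid f π := by
  have hpf : π f = 1 := by
    have := hsym 0
    rw [h0, sub_zero] at this
    linarith
  have hval : Valid f π := by
    refine ⟨hnn, fun y hy => ?_⟩
    obtain ⟨z, hz⟩ := hy
    have hz' : Wt y - f = (z : ℝ) := hz
    have hwy : Wt y = f + z := by linarith
    show (1:ℝ) ≤ Cost π y
    calc (1:ℝ) = π f := hpf.symm
      _ = π (f + z) := (hper f z).symm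
      _ = π (Wt y) := by rw [hwy]
      _ ≤ Cost π y := cost_ge_wt h0 hsub hnn y
  refine ⟨hval, ?_⟩
  rintro ⟨π', hv', hle, hne⟩
  apply hne
  funext x
  have h1 : 1 ≤ π' x + π' (f - x) := valid_symm_ge hv' x
  have h2 : π' (f - x) ≤ π (f - x) := hle _
  have h3 := hsym x
  exact le_antisymm (hle x) (by linarith)


noncomputable section GeomSec

open Classical Set Metric

/-- the closed cell determined by three intervals -/
def cell (u₁ v₁ u₂ v₂ u₃ v₃ : ℝ) : Set (ℝ × ℝ) :=
  {p | u₁ ≤ p.1 ∧ p.1 ≤ v₁ ∧ u₂ ≤ p.2 ∧ p.2 ≤ v₂ ∧ u₃ ≤ p.1 + p.2 ∧ p.1 + p.2 ≤ v₃}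

lemma isLinearMap_fst : IsLinearMap ℝ (fun p : ℝ × ℝ => p.1) := ⟨fun _ _ => rfl, fun _ _ => rfl⟩
lemma isLinearMap_snd : IsLinearMap ℝ (fun p : ℝ × ℝ => p.2) := ⟨fun _ _ => rfl, fun _ _ => rfl⟩
lemma isLinearMap_addc : IsLinearMap ℝ (fun p : ℝ × ℝ => p.1 + p.2) :=
  ⟨fun p q => by simp [Prod.fst_add, Prod.snd_add]; ring,
   fun c p => by simp [Prod.smul_fst, Prod.smul_snd, smul_eq_mul]; ring⟩

lemma cell_convex (u₁ v₁ u₂ v₂ u₃ v₃ : ℝ) : Convex ℝ (cell u₁ v₁ u₂ v₂ u₃ v₃) := by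
  have : cell u₁ v₁ u₂ v₂ u₃ v₃ = {p : ℝ × ℝ | u₁ ≤ p.1} ∩ ({p : ℝ × ℝ | p.1 ≤ v₁} ∩
      ({p : ℝ × ℝ | u₂ ≤ p.2} ∩ ({p : ℝ × ℝ | p.2 ≤ v₂} ∩
      ({p : ℝ × ℝ | u₃ ≤ p.1 + p.2} ∩ {p : ℝ × ℝ | p.1 + p.2 ≤ v₃})))) := by
    ext p; simp [cell, Set.mem_setOf_eq, and_assoc]
  rw [this]
  exact (convex_halfSpace_ge isLinearMap_fst u₁).inter
    ((convex_halfSpace_le isLinearMap_fst v₁).inter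
    ((convex_halfSpace_ge isLinearMap_snd u₂).inter
    ((convex_halfSpace_le isLinearMap_snd v₂).inter
    ((convex_halfSpace_ge isLinearMap_addc u₃).inter
     (convex_halfSpace_le isLinearMap_addc v₃)))))

lemma cell_isCompact (u₁ v₁ u₂ v₂ u₃ v₃ : ℝ) : IsCompact (cell u₁ v₁ u₂ v₂ u₃ v₃) := by
  apply IsCompact.of_isClosed_subset ((isCompact_Icc (a := u₁) (b := v₁)).prod
    (isCompact_Icc (a := u₂) (b := v₂)))
  · apply IsClosed.inter (isClosed_le continuous_const continuous_fst)
    apply IsClosed.inter (isClosed_le continuous_fst continuous_const)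
    apply IsClosed.inter (isClosed_le continuous_const continuous_snd)
    apply IsClosed.inter (isClosed_le continuous_snd continuous_const)
    exact IsClosed.inter (isClosed_le continuous_const (continuous_fst.add continuous_snd))
      (isClosed_le (continuous_fst.add continuous_snd) continuous_const)
  · rintro p ⟨h1, h2, h3, h4, -, -⟩
    exact ⟨⟨h1, h2⟩, ⟨h3, h4⟩⟩

lemma affine_combo (V : Finset (ℝ × ℝ)) (w : ℝ × ℝ → ℝ) (hw : ∑ y ∈ V, w y = 1)
    (p : ℝ × ℝ) (hp : p = ∑ y ∈ V, w y • y) (α β γ : ℝ) :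
    α * p.1 + β * p.2 + γ = ∑ y ∈ V, w y * (α * y.1 + β * y.2 + γ) := by
  have h1 : p.1 = ∑ y ∈ V, w y * y.1 := by
    rw [hp, Prod.fst_sum]
    exact Finset.sum_congr rfl (fun y _ => rfl)
  have h2 : p.2 = ∑ y ∈ V, w y * y.2 := by
    rw [hp, Prod.snd_sum]
    exact Finset.sum_congr rfl (fun y _ => rfl)
  have : ∑ y ∈ V, w y * (α * y.1 + β * y.2 + γ)
      = α * (∑ y ∈ V, w y * y.1) + β * (∑ y ∈ V, w y * y.2) + γ * (∑ y ∈ V, w y) := by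
    rw [Finset.mul_sum, Finset.mul_sum, Finset.mul_sum, ← Finset.sum_add_distrib,
      ← Finset.sum_add_distrib]
    exact Finset.sum_congr rfl (fun y _ => by ring)
  rw [this, hw, ← h1, ← h2]; ring

lemma cell_extreme_mem (u₁ v₁ u₂ v₂ u₃ v₃ : ℝ) (D' : Finset ℝ)
    (h1 : u₁ ∈ D') (h2 : v₁ ∈ D') (h3 : u₂ ∈ D') (h4 : v₂ ∈ D')
    (hsub : ∀ i ∈ ({u₃, v₃} : Set ℝ), ∀ j ∈ ({u₁, v₁, u₂, v₂} : Set ℝ), i - j ∈ (D' : Set ℝ))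
    {p : ℝ × ℝ} (hp : p ∈ extremePoints ℝ (cell u₁ v₁ u₂ v₂ u₃ v₃)) :
    p.1 ∈ (D' : Set ℝ) ∧ p.2 ∈ (D' : Set ℝ) := by
  obtain ⟨hpC, hext⟩ := mem_extremePoints.mp hp
  obtain ⟨c1, c2, c3, c4, c5, c6⟩ := hpC
  have key : ∀ w : ℝ × ℝ, w ≠ 0 → ∀ δ : ℝ, 0 < δ →
      p - δ • w ∈ cell u₁ v₁ u₂ v₂ u₃ v₃ → p + δ • w ∈ cell u₁ v₁ u₂ v₂ u₃ v₃ → False := by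
    intro w hw δ hδ hm hp'
    have hmem : p ∈ openSegment ℝ (p - δ • w) (p + δ • w) := by
      refine ⟨1/2, 1/2, by norm_num, by norm_num, by norm_num, ?_⟩
      module
    have heq := (hext _ hm _ hp' hmem).1
    have hz : δ • w = 0 := by
      have := sub_eq_self.mp heq
      exact this
    rcases smul_eq_zero.mp hz with h | h
    · exact absurd h (ne_of_gt hδ)
    · exact hw h
  by_cases tx : p.1 = u₁ ∨ p.1 = v₁
  · by_cases ty : p.2 = u₂ ∨ p.2 = v₂
    · constructor
      · rcases tx with h | h <;> rw [h] <;> simpa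
      · rcases ty with h | h <;> rw [h] <;> simpa
    · by_cases td : p.1 + p.2 = u₃ ∨ p.1 + p.2 = v₃
      · -- x and diagonal tight
        constructor
        · rcases tx with h | h <;> rw [h] <;> simpa
        · have hx1 : p.1 ∈ ({u₁, v₁, u₂, v₂} : Set ℝ) := by
            rcases tx with h | h <;> rw [h] <;> simp
          have hs : (p.1 + p.2) ∈ ({u₃, v₃} : Set ℝ) := by
            rcases td with h | h <;> rw [h] <;> simp
          have := hsub _ hs _ hx1
          simpa using this
      · -- only x tight : move in direction (0,1)
        exfalso
        push_neg at ty td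
        have hy1 : u₂ < p.2 := lt_of_le_of_ne c3 (Ne.symm ty.1)
        have hy2 : p.2 < v₂ := lt_of_le_of_ne c4 ty.2
        have hd1 : u₃ < p.1 + p.2 := lt_of_le_of_ne c5 (Ne.symm td.1)
        have hd2 : p.1 + p.2 < v₃ := lt_of_le_of_ne c6 td.2
        set δ := min (min (p.2 - u₂) (v₂ - p.2)) (min (p.1 + p.2 - u₃) (v₃ - p.1 - p.2)) with hδdef
        have hδ : 0 < δ := by
          apply lt_min (lt_min (by linarith) (by linarith)) (lt_min (by linarith) (by linarith))
        have hδ1 : δ ≤ p.2 - u₂ := le_trans (min_le_left _ _) (min_le_left _ _)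
        have hδ2 : δ ≤ v₂ - p.2 := le_trans (min_le_left _ _) (min_le_right _ _)
        have hδ3 : δ ≤ p.1 + p.2 - u₃ := le_trans (min_le_right _ _) (min_le_left _ _)
        have hδ4 : δ ≤ v₃ - p.1 - p.2 := le_trans (min_le_right _ _) (min_le_right _ _)
        apply key ((0 : ℝ), (1 : ℝ)) (by simp) δ hδ
        · refine ⟨?_, ?_, ?_, ?_, ?_, ?_⟩ <;>
            simp only [Prod.fst_sub, Prod.snd_sub, Prod.smul_fst, Prod.smul_snd,
              smul_eq_mul, mul_zero, mul_one] <;> linarith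
        · refine ⟨?_, ?_, ?_, ?_, ?_, ?_⟩ <;>
            simp only [Prod.fst_add, Prod.snd_add, Prod.smul_fst, Prod.smul_snd,
              smul_eq_mul, mul_zero, mul_one] <;> linarith
  · by_cases ty : p.2 = u₂ ∨ p.2 = v₂
    · by_cases td : p.1 + p.2 = u₃ ∨ p.1 + p.2 = v₃
      · -- y and diagonal tight
        constructor
        · have hy1 : p.2 ∈ ({u₁, v₁, u₂, v₂} : Set ℝ) := by
            rcases ty with h | h <;> rw [h] <;> simp
          have hs : (p.1 + p.2) ∈ ({u₃, v₃} : Set ℝ) := by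
            rcases td with h | h <;> rw [h] <;> simp
          have := hsub _ hs _ hy1
          have he : p.1 + p.2 - p.2 = p.1 := by ring
          rwa [he] at this
        · rcases ty with h | h <;> rw [h] <;> simpa
      · -- only y tight : move in direction (1,0)
        exfalso
        push_neg at tx td
        have hx1 : u₁ < p.1 := lt_of_le_of_ne c1 (Ne.symm tx.1)
        have hx2 : p.1 < v₁ := lt_of_le_of_ne c2 tx.2
        have hd1 : u₃ < p.1 + p.2 := lt_of_le_of_ne c5 (Ne.symm td.1)
        have hd2 : p.1 + p.2 < v₃ := lt_of_le_of_ne c6 td.2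
        set δ := min (min (p.1 - u₁) (v₁ - p.1)) (min (p.1 + p.2 - u₃) (v₃ - p.1 - p.2)) with hδdef
        have hδ : 0 < δ := by
          apply lt_min (lt_min (by linarith) (by linarith)) (lt_min (by linarith) (by linarith))
        have hδ1 : δ ≤ p.1 - u₁ := le_trans (min_le_left _ _) (min_le_left _ _)
        have hδ2 : δ ≤ v₁ - p.1 := le_trans (min_le_left _ _) (min_le_right _ _)
        have hδ3 : δ ≤ p.1 + p.2 - u₃ := le_trans (min_le_right _ _) (min_le_left _ _)
        have hδ4 : δ ≤ v₃ - p.1 - p.2 := le_trans (min_le_right _ _) (min_le_right _ _)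
        apply key ((1 : ℝ), (0 : ℝ)) (by simp) δ hδ
        · refine ⟨?_, ?_, ?_, ?_, ?_, ?_⟩ <;>
            simp only [Prod.fst_sub, Prod.snd_sub, Prod.smul_fst, Prod.smul_snd,
              smul_eq_mul, mul_zero, mul_one] <;> linarith
        · refine ⟨?_, ?_, ?_, ?_, ?_, ?_⟩ <;>
            simp only [Prod.fst_add, Prod.snd_add, Prod.smul_fst, Prod.smul_snd,
              smul_eq_mul, mul_zero, mul_one] <;> linarith
    · -- x and y both free : move in direction (1,-1)
      exfalso
      push_neg at tx ty
      have hx1 : u₁ < p.1 := lt_of_le_of_ne c1 (Ne.symm tx.1)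
      have hx2 : p.1 < v₁ := lt_of_le_of_ne c2 tx.2
      have hy1 : u₂ < p.2 := lt_of_le_of_ne c3 (Ne.symm ty.1)
      have hy2 : p.2 < v₂ := lt_of_le_of_ne c4 ty.2
      set δ := min (min (p.1 - u₁) (v₁ - p.1)) (min (p.2 - u₂) (v₂ - p.2)) with hδdef
      have hδ : 0 < δ := by
        apply lt_min (lt_min (by linarith) (by linarith)) (lt_min (by linarith) (by linarith))
      have hδ1 : δ ≤ p.1 - u₁ := le_trans (min_le_left _ _) (min_le_left _ _)
      have hδ2 : δ ≤ v₁ - p.1 := le_trans (min_le_left _ _) (min_le_right _ _)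
      have hδ3 : δ ≤ p.2 - u₂ := le_trans (min_le_right _ _) (min_le_left _ _)
      have hδ4 : δ ≤ v₂ - p.2 := le_trans (min_le_right _ _) (min_le_right _ _)
      apply key ((1 : ℝ), (-1 : ℝ)) (by simp [Prod.ext_iff]) δ hδ
      · refine ⟨?_, ?_, ?_, ?_, ?_, ?_⟩ <;>
          simp only [Prod.fst_sub, Prod.snd_sub, Prod.smul_fst, Prod.smul_snd,
            smul_eq_mul, mul_neg, mul_one] <;> linarith
      · refine ⟨?_, ?_, ?_, ?_, ?_, ?_⟩ <;>
          simp only [Prod.fst_add, Prod.snd_add, Prod.smul_fst, Prod.smul_snd,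
            smul_eq_mul, mul_neg, mul_one] <;> linarith


lemma cell_bound (F G : ℝ × ℝ → ℝ) (hFc : Continuous F) (hGc : Continuous G)
    (hF0 : ∀ p, 0 ≤ F p) (lam : ℝ) (hlam : 0 < lam)
    (hGd : ∀ p z : ℝ × ℝ, F z = 0 → |G p| ≤ lam * dist p z)
    (u₁ v₁ u₂ v₂ u₃ v₃ : ℝ) (α β γ : ℝ)
    (hA : ∀ p ∈ cell u₁ v₁ u₂ v₂ u₃ v₃, F p = α * p.1 + β * p.2 + γ) :
    ∃ M : ℝ, 0 ≤ M ∧ ∀ p ∈ cell u₁ v₁ u₂ v₂ u₃ v₃, |G p| ≤ M * F p := by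
  classical
  rcases (cell u₁ v₁ u₂ v₂ u₃ v₃).eq_empty_or_nonempty with hC | hCne
  · exact ⟨0, le_rfl, fun p hp => absurd (hC ▸ hp) (Set.notMem_empty p)⟩
  set A : ℝ × ℝ → ℝ := fun p => α * p.1 + β * p.2 + γ with hAdef
  have hA' : ∀ p ∈ cell u₁ v₁ u₂ v₂ u₃ v₃, F p = A p := hA
  have hAc : ∀ (W : Finset (ℝ × ℝ)) (w : ℝ × ℝ → ℝ), (∑ y ∈ W, w y = 1) → ∀ p : ℝ × ℝ,
      (p = ∑ y ∈ W, w y • y) → A p = ∑ y ∈ W, w y * A y := by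
    intro W w hw p hp
    exact affine_combo W w hw p hp α β γ
  by_cases hZ : ∃ z ∈ cell u₁ v₁ u₂ v₂ u₃ v₃, A z = 0
  swap
  · -- F strictly positive on the cell
    obtain ⟨pm, hpm, hmin⟩ :=
      (cell_isCompact u₁ v₁ u₂ v₂ u₃ v₃).exists_isMinOn hCne hFc.continuousOn
    have hμ : 0 < F pm := by
      rcases lt_or_eq_of_le (hF0 pm) with h | h
      · exact h
      · refine absurd ⟨pm, hpm, ?_⟩ hZ
        show α * pm.1 + β * pm.2 + γ = 0
        rw [← hA pm hpm]
        exact h.symm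
    obtain ⟨pM, hpM, hmax⟩ :=
      (cell_isCompact u₁ v₁ u₂ v₂ u₃ v₃).exists_isMaxOn hCne
        (continuous_abs.comp hGc).continuousOn
    refine ⟨|G pM| / F pm, by positivity, fun p hp => ?_⟩
    have h1 : |G p| ≤ |G pM| := hmax hp
    have h2 : F pm ≤ F p := hmin hp
    calc |G p| ≤ |G pM| := h1
      _ = (|G pM| / F pm) * F pm := by field_simp
      _ ≤ (|G pM| / F pm) * F p := by
          apply mul_le_mul_of_nonneg_left h2 (by positivity)
  · obtain ⟨z₀, hz₀C, hz₀A⟩ := hZ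
    set D₆ : Finset ℝ := {u₁, v₁, u₂, v₂, u₃, v₃} with hD₆
    set D' : Finset ℝ := D₆ ∪ Finset.image₂ (· - ·) D₆ D₆ with hD'
    set V : Finset (ℝ × ℝ) := (D' ×ˢ D').filter (· ∈ cell u₁ v₁ u₂ v₂ u₃ v₃) with hV
    have hVC : ∀ y ∈ V, y ∈ cell u₁ v₁ u₂ v₂ u₃ v₃ := fun y hy => (Finset.mem_filter.mp hy).2
    have hu₁ : u₁ ∈ D₆ := Finset.mem_insert_self _ _
    have hv₁ : v₁ ∈ D₆ := Finset.mem_insert_of_mem (Finset.mem_insert_self _ _)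
    have hu₂ : u₂ ∈ D₆ := Finset.mem_insert_of_mem (Finset.mem_insert_of_mem
      (Finset.mem_insert_self _ _))
    have hv₂ : v₂ ∈ D₆ := Finset.mem_insert_of_mem (Finset.mem_insert_of_mem
      (Finset.mem_insert_of_mem (Finset.mem_insert_self _ _)))
    have hu₃ : u₃ ∈ D₆ := Finset.mem_insert_of_mem (Finset.mem_insert_of_mem
      (Finset.mem_insert_of_mem (Finset.mem_insert_of_mem (Finset.mem_insert_self _ _))))
    have hv₃ : v₃ ∈ D₆ := Finset.mem_insert_of_mem (Finset.mem_insert_of_mem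
      (Finset.mem_insert_of_mem (Finset.mem_insert_of_mem (Finset.mem_insert_of_mem
      (Finset.mem_singleton_self _)))))
    have hD₆D' : ∀ x ∈ D₆, x ∈ D' := fun x hx => Finset.mem_union_left _ hx
    have hext : extremePoints ℝ (cell u₁ v₁ u₂ v₂ u₃ v₃) ⊆ (V : Set (ℝ × ℝ)) := by
      intro p hp
      have hmem := cell_extreme_mem u₁ v₁ u₂ v₂ u₃ v₃ D'
        (hD₆D' _ hu₁) (hD₆D' _ hv₁) (hD₆D' _ hu₂) (hD₆D' _ hv₂)
        (?_) hp
      · have hpC : p ∈ cell u₁ v₁ u₂ v₂ u₃ v₃ := extremePoints_subset hp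
        simp only [hV, Finset.coe_filter, Set.mem_setOf_eq]
        exact ⟨Finset.mem_product.mpr ⟨hmem.1, hmem.2⟩, hpC⟩
      · intro i hi j hj
        apply Finset.mem_coe.mpr
        apply Finset.mem_union_right
        have hiD : i ∈ D₆ := by
          simp only [Set.mem_insert_iff, Set.mem_singleton_iff] at hi
          rcases hi with rfl | rfl
          · exact hu₃
          · exact hv₃
        have hjD : j ∈ D₆ := by
          simp only [Set.mem_insert_iff, Set.mem_singleton_iff] at hj
          rcases hj with rfl | rfl | rfl | rfl
          · exact hu₁
          · exact hv₁
          · exact hu₂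
          · exact hv₂
        exact Finset.mem_image₂_of_mem hiD hjD
    have hsubC : cell u₁ v₁ u₂ v₂ u₃ v₃ ⊆ convexHull ℝ (V : Set (ℝ × ℝ)) := by
      have hKM := closure_convexHull_extremePoints
        (cell_isCompact u₁ v₁ u₂ v₂ u₃ v₃) (cell_convex u₁ v₁ u₂ v₂ u₃ v₃)
      have h1 : convexHull ℝ (extremePoints ℝ (cell u₁ v₁ u₂ v₂ u₃ v₃))
          ⊆ convexHull ℝ (V : Set (ℝ × ℝ)) := convexHull_mono hext
      have h2 : IsClosed (convexHull ℝ (V : Set (ℝ × ℝ))) :=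
        (V.finite_toSet.isCompact_convexHull ℝ).isClosed
      calc cell u₁ v₁ u₂ v₂ u₃ v₃
          = closure (convexHull ℝ (extremePoints ℝ (cell u₁ v₁ u₂ v₂ u₃ v₃))) := hKM.symm
        _ ⊆ closure (convexHull ℝ (V : Set (ℝ × ℝ))) := closure_mono h1
        _ = convexHull ℝ (V : Set (ℝ × ℝ)) := h2.closure_eq
    have hcombo : ∀ p ∈ cell u₁ v₁ u₂ v₂ u₃ v₃, ∃ w : ℝ × ℝ → ℝ,
        (∀ y ∈ V, 0 ≤ w y) ∧ ∑ y ∈ V, w y = 1 ∧ p = ∑ y ∈ V, w y • y := by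
      intro p hp
      have hmem := hsubC hp
      rw [Finset.convexHull_eq] at hmem
      obtain ⟨w, hw0, hw1, hwc⟩ := hmem
      refine ⟨w, hw0, hw1, ?_⟩
      rw [← hwc, Finset.centerMass_eq_of_sum_1 _ _ hw1]
      rfl
    have hAV : ∀ y ∈ V, 0 ≤ A y := fun y hy => by
      rw [← hA' y (hVC y hy)]; exact hF0 y
    obtain ⟨P₀, hP₀V, hP₀A⟩ : ∃ P₀ ∈ V, A P₀ = 0 := by
      obtain ⟨w, hw0, hw1, hwc⟩ := hcombo z₀ hz₀C
      have hAz : A z₀ = ∑ y ∈ V, w y * A y := hAc V w hw1 z₀ hwc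
      have hall : ∀ y ∈ V, w y * A y = 0 := by
        rw [hz₀A] at hAz
        exact (Finset.sum_eq_zero_iff_of_nonneg
          (fun y hy => mul_nonneg (hw0 y hy) (hAV y hy))).mp hAz.symm
      obtain ⟨y₀, hy₀, hwne⟩ : ∃ y₀ ∈ V, w y₀ ≠ 0 := by
        by_contra hc
        push_neg at hc
        rw [Finset.sum_eq_zero hc] at hw1
        norm_num at hw1
      refine ⟨y₀, hy₀, ?_⟩
      rcases mul_eq_zero.mp (hall y₀ hy₀) with h | h
      · exact absurd h hwne
      · exact h
    set V' : Finset (ℝ × ℝ) := V.filter (fun y => 0 < A y) with hV'def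
    have hVz : ∀ y ∈ V, y ∉ V' → A y = 0 := by
      intro y hy hni
      have : ¬ 0 < A y := fun hlt => hni (Finset.mem_filter.mpr ⟨hy, hlt⟩)
      linarith [hAV y hy]
    have hP₀notV' : P₀ ∉ V' := by
      intro hmem
      have := (Finset.mem_filter.mp hmem).2
      rw [hP₀A] at this
      exact lt_irrefl 0 this
    rcases V'.eq_empty_or_nonempty with hV'e | hV'ne
    · refine ⟨0, le_rfl, fun p hp => ?_⟩
      obtain ⟨w, hw0, hw1, hwc⟩ := hcombo p hp
      have hAp : A p = 0 := by
        rw [hAc V w hw1 p hwc]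
        apply Finset.sum_eq_zero
        intro y hy
        rw [hVz y hy (by simp [hV'e])]
        ring
      have hFp : F p = 0 := by rw [hA' p hp]; exact hAp
      have hG0 := hGd p p hFp
      rw [dist_self, mul_zero] at hG0
      calc |G p| ≤ 0 := hG0
        _ = 0 * F p := by ring
    · set m : ℝ := (V'.image A).min' (hV'ne.image A) with hmdef
      have hm_mem : m ∈ V'.image A := Finset.min'_mem _ _
      have hm0 : 0 < m := by
        obtain ⟨y, hy, hAy⟩ := Finset.mem_image.mp hm_mem
        rw [← hAy]
        exact (Finset.mem_filter.mp hy).2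
      have hmle : ∀ y ∈ V', m ≤ A y := fun y hy =>
        Finset.min'_le _ _ (Finset.mem_image_of_mem A hy)
      set R : ℝ := (V.image (fun y => dist y P₀)).max' ((Finset.Nonempty.image ⟨P₀, hP₀V⟩ _)) with hRdef
      have hRle : ∀ y ∈ V, dist y P₀ ≤ R := fun y hy =>
        Finset.le_max' (V.image (fun q => dist q P₀)) (dist y P₀)
          (Finset.mem_image_of_mem (fun q => dist q P₀) hy)
      have hR0 : 0 ≤ R := le_trans dist_nonneg (hRle P₀ hP₀V)
      refine ⟨lam * R / m, by positivity, fun p hp => ?_⟩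
      obtain ⟨w, hw0, hw1, hwc⟩ := hcombo p hp
      set S' : ℝ := ∑ y ∈ V', w y with hS'def
      have hsplitw : ∑ y ∈ V', w y • y + ∑ y ∈ V.filter (fun y => ¬ 0 < A y), w y • y
          = ∑ y ∈ V, w y • y := Finset.sum_filter_add_sum_filter_not V _ _
      set z : ℝ × ℝ := (∑ y ∈ V.filter (fun y => ¬ 0 < A y), w y • y) + S' • P₀ with hzdef
      -- z is a convex combination
      set w'' : ℝ × ℝ → ℝ := fun y => (if 0 < A y then 0 else w y) + (if y = P₀ then S' else 0)
        with hw''def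
      have hS'nn : 0 ≤ S' := Finset.sum_nonneg
        (fun y hy => hw0 y (Finset.mem_filter.mp hy).1)
      have hw''0 : ∀ y ∈ V, 0 ≤ w'' y := by
        intro y hy
        simp only [hw''def]
        apply add_nonneg
        · split_ifs
          · exact le_rfl
          · exact hw0 y hy
        · split_ifs
          · exact hS'nn
          · exact le_rfl
      have hw''sum : ∑ y ∈ V, w'' y = 1 := by
        simp only [hw''def]
        rw [Finset.sum_add_distrib]
        have e1 : ∑ y ∈ V, (if 0 < A y then (0:ℝ) else w y)
            = ∑ y ∈ V.filter (fun y => ¬ 0 < A y), w y := by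
          rw [Finset.sum_ite, Finset.sum_const, smul_zero, zero_add]
        have e2 : ∑ y ∈ V, (if y = P₀ then S' else 0) = S' := by
          rw [Finset.sum_ite_eq' V P₀ (fun _ => S')]
          simp [hP₀V]
        rw [e1, e2]
        have := Finset.sum_filter_add_sum_filter_not V (fun y => 0 < A y) w
        rw [← hw1, ← this, ← hS'def]
        ring
      have hw''val : ∑ y ∈ V, w'' y • y = z := by
        simp only [hw''def, add_smul]
        rw [Finset.sum_add_distrib]
        have e1 : ∑ y ∈ V, (if 0 < A y then (0:ℝ) else w y) • y
            = ∑ y ∈ V.filter (fun y => ¬ 0 < A y), w y • y := by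
          rw [← Finset.sum_filter_add_sum_filter_not V (fun y => 0 < A y)
            (fun y => (if 0 < A y then (0:ℝ) else w y) • y)]
          have ha : ∑ y ∈ V.filter (fun y => 0 < A y),
              (if 0 < A y then (0:ℝ) else w y) • y = 0 := by
            apply Finset.sum_eq_zero
            intro y hy
            rw [if_pos (Finset.mem_filter.mp hy).2, zero_smul]
          have hb : ∑ y ∈ V.filter (fun y => ¬ 0 < A y),
              (if 0 < A y then (0:ℝ) else w y) • y
              = ∑ y ∈ V.filter (fun y => ¬ 0 < A y), w y • y := by
            apply Finset.sum_congr rfl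
            intro y hy
            rw [if_neg (Finset.mem_filter.mp hy).2]
          rw [ha, hb, zero_add]
        have e2 : ∑ y ∈ V, (if y = P₀ then S' else 0) • y = S' • P₀ := by
          have hbody : ∀ y ∈ V, (if y = P₀ then S' else (0:ℝ)) • y
              = (if y = P₀ then S' • P₀ else 0) := by
            intro y _
            by_cases h : y = P₀
            · rw [if_pos h, if_pos h, h]
            · rw [if_neg h, if_neg h, zero_smul]
          rw [Finset.sum_congr rfl hbody, Finset.sum_ite_eq' V P₀ (fun _ => S' • P₀),
            if_pos hP₀V]
        rw [e1, e2, hzdef]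
      have hzC : z ∈ cell u₁ v₁ u₂ v₂ u₃ v₃ := by
        rw [← hw''val]
        exact (cell_convex u₁ v₁ u₂ v₂ u₃ v₃).sum_mem hw''0 hw''sum (fun y hy => hVC y hy)
      have hzA : A z = 0 := by
        rw [hAc V w'' hw''sum z hw''val.symm]
        apply Finset.sum_eq_zero
        intro y hy
        by_cases hcase : 0 < A y
        · simp only [hw''def]
          rw [if_pos hcase]
          by_cases hP : y = P₀
          · rw [hP] at hcase
            rw [hP₀A] at hcase
            exact absurd hcase (lt_irrefl 0)
          · rw [if_neg hP]
            ring
        · have : A y = 0 := by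
            have hyV : y ∈ V := hy
            have : ¬ 0 < A y := hcase
            linarith [hAV y hyV, not_lt.mp this]
          rw [this, mul_zero]
      have hFz : F z = 0 := by rw [hA' z hzC]; exact hzA
      -- distance estimate
      have hdiff : p - z = ∑ y ∈ V', w y • (y - P₀) := by
        have h1 : p = ∑ y ∈ V', w y • y + ∑ y ∈ V.filter (fun y => ¬ 0 < A y), w y • y := by
          rw [hsplitw, ← hwc]
        have h2 : S' • P₀ = ∑ y ∈ V', w y • P₀ := Finset.sum_smul
        rw [h1, hzdef, h2]
        rw [Finset.sum_congr rfl (fun y _ => smul_sub (w y) y P₀)]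
        rw [Finset.sum_sub_distrib]
        abel
      have hAsum : ∑ y ∈ V', w y * A y = A p := by
        rw [hAc V w hw1 p hwc]
        rw [← Finset.sum_filter_add_sum_filter_not V (fun y => 0 < A y) (fun y => w y * A y)]
        have : ∑ y ∈ V.filter (fun y => ¬ 0 < A y), w y * A y = 0 := by
          apply Finset.sum_eq_zero
          intro y hy
          rw [hVz y (Finset.mem_filter.mp hy).1 (fun hm => (Finset.mem_filter.mp hy).2
            (Finset.mem_filter.mp hm).2), mul_zero]
        rw [this, add_zero]
      have hdist : dist p z ≤ (R / m) * A p := by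
        rw [dist_eq_norm, hdiff]
        calc ‖∑ y ∈ V', w y • (y - P₀)‖ ≤ ∑ y ∈ V', ‖w y • (y - P₀)‖ :=
              norm_sum_le _ _
          _ = ∑ y ∈ V', w y * dist y P₀ := by
              apply Finset.sum_congr rfl
              intro y hy
              rw [norm_smul, Real.norm_of_nonneg (hw0 y (Finset.mem_filter.mp hy).1),
                ← dist_eq_norm]
          _ ≤ ∑ y ∈ V', (R / m) * (w y * A y) := by
              apply Finset.sum_le_sum
              intro y hy
              have hyV : y ∈ V := (Finset.mem_filter.mp hy).1
              have hAy : m ≤ A y := hmle y hy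
              have hdy : dist y P₀ ≤ R := hRle y hyV
              have hwy : 0 ≤ w y := hw0 y hyV
              have hRA : R ≤ (R / m) * A y := by
                rw [div_mul_eq_mul_div, le_div_iff₀ hm0]
                nlinarith
              calc w y * dist y P₀ ≤ w y * R := mul_le_mul_of_nonneg_left hdy hwy
                _ ≤ w y * ((R / m) * A y) := mul_le_mul_of_nonneg_left hRA hwy
                _ = (R / m) * (w y * A y) := by ring
          _ = (R / m) * A p := by rw [← Finset.mul_sum, hAsum]
      have hGp := hGd p z hFz
      have hFpA : F p = A p := hA' p hp
      calc |G p| ≤ lam * dist p z := hGp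
        _ ≤ lam * ((R / m) * A p) := by
            apply mul_le_mul_of_nonneg_left hdist (le_of_lt hlam)
        _ = (lam * R / m) * F p := by rw [hFpA]; ring

/-- slack function of `g` -/
def slack (g : ℝ → ℝ) : ℝ × ℝ → ℝ := fun p => g p.1 + g p.2 - g (p.1 + p.2)

lemma slack_continuous {g : ℝ → ℝ} (hg : Continuous g) : Continuous (slack g) := by
  apply Continuous.sub
  · exact (hg.comp continuous_fst).add (hg.comp continuous_snd)
  · exact hg.comp (continuous_fst.add continuous_snd)

/-- A closed discrete set meets a compact interval in a finite set. -/
lemma finite_break (B : Set ℝ) (hBc : IsClosed B)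
    (hBd : ∀ x ∈ B, ∃ ε > (0 : ℝ), ∀ y ∈ B, |y - x| < ε → y = x) :
    (B ∩ Icc (-1 : ℝ) 3).Finite := by
  classical
  set S := B ∩ Icc (-1 : ℝ) 3 with hS
  have hScomp : IsCompact S :=
    IsCompact.of_isClosed_subset isCompact_Icc (hBc.inter isClosed_Icc) inter_subset_right
  -- choose isolation radii
  have hchoice : ∀ x : ℝ, ∃ ε > (0:ℝ), x ∈ B → ∀ y ∈ B, |y - x| < ε → y = x := by
    intro x
    by_cases hx : x ∈ B
    · obtain ⟨ε, hε, h⟩ := hBd x hx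
      exact ⟨ε, hε, fun _ => h⟩
    · exact ⟨1, one_pos, fun h => absurd h hx⟩
  choose ε hε hiso using hchoice
  have hcover : S ⊆ ⋃ x ∈ S, ball x (ε x) := by
    intro x hx
    exact mem_biUnion hx (mem_ball_self (hε x))
  obtain ⟨t, ht⟩ := hScomp.elim_finite_subcover_image
    (fun x _ => isOpen_ball) hcover
  obtain ⟨htsub, htfin, htcov⟩ := ht
  apply Set.Finite.subset (htfin.image id)
  intro x hx
  obtain ⟨c, hc, hxc⟩ := by
    have := htcov hx
    simpa only [mem_iUnion, exists_prop] using this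
  have hxB : x ∈ B := hx.1
  have hcB : c ∈ B := (htsub hc).1
  have : x = c := hiso c hcB x hxB (by
    rw [← Real.dist_eq]
    exact mem_ball.mp hxc)
  simp only [image_id]
  rw [this]; exact hc

/-- affine on the closure of a break-free interval -/
lemma affine_on_gap {π : ℝ → ℝ} (hcont : Continuous π) (B : Set ℝ)
    (hBa : ∀ x ∉ B, ∃ a b : ℝ, ∀ z ∈ connectedComponentIn Bᶜ x, π z = a * z + b)
    (u v : ℝ) (huv : u < v) (hgap : Ioo u v ∩ B = ∅) :
    ∃ a b : ℝ, ∀ z ∈ Icc u v, π z = a * z + b := by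
  set x₀ := (u + v) / 2 with hx₀
  have hx₀m : x₀ ∈ Ioo u v := by constructor <;> (simp only [hx₀]; linarith)
  have hIoo : Ioo u v ⊆ Bᶜ := fun z hz hzB =>
    (Set.eq_empty_iff_forall_notMem.mp hgap z) ⟨hz, hzB⟩
  have hx₀B : x₀ ∉ B := hIoo hx₀m
  obtain ⟨a, b, hab⟩ := hBa x₀ hx₀B
  refine ⟨a, b, fun z hz => ?_⟩
  have hsub : Ioo u v ⊆ connectedComponentIn Bᶜ x₀ :=
    isPreconnected_Ioo.subset_connectedComponentIn hx₀m hIoo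
  have hclosed : IsClosed {z : ℝ | π z = a * z + b} :=
    isClosed_eq hcont (by continuity)
  have hIccsub : Icc u v ⊆ {z : ℝ | π z = a * z + b} := by
    rw [← closure_Ioo (ne_of_lt huv)]
    apply closure_minimal _ hclosed
    intro z hzI
    exact hab z (hsub hzI)
  exact hIccsub hz

/-- gap covering -/
lemma gap_cover (B : Set ℝ) (D : Finset ℝ)
    (hDB : ∀ w ∈ B, w ∈ Icc (-1:ℝ) 3 → w ∈ D)
    (hD1 : (-1:ℝ) ∈ D) (hD3 : (3:ℝ) ∈ D) (hDIcc : ∀ d ∈ D, (-1:ℝ) ≤ d ∧ d ≤ 3)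
    (x : ℝ) (hx0 : 0 ≤ x) (hx2 : x ≤ 2) :
    ∃ u v : ℝ, u ∈ D ∧ v ∈ D ∧ u ≤ x ∧ x ≤ v ∧ u < v ∧ Ioo u v ∩ B = ∅ := by
  classical
  have hne1 : (D.filter (fun d => d ≤ x)).Nonempty :=
    ⟨-1, Finset.mem_filter.mpr ⟨hD1, by linarith⟩⟩
  have hne2 : (D.filter (fun d => x < d)).Nonempty :=
    ⟨3, Finset.mem_filter.mpr ⟨hD3, by linarith⟩⟩
  set u := (D.filter (fun d => d ≤ x)).max' hne1 with hu
  set v := (D.filter (fun d => x < d)).min' hne2 with hv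
  have huD : u ∈ D ∧ u ≤ x := by
    have := Finset.max'_mem _ hne1
    exact ⟨(Finset.mem_filter.mp this).1, (Finset.mem_filter.mp this).2⟩
  have hvD : v ∈ D ∧ x < v := by
    have := Finset.min'_mem _ hne2
    exact ⟨(Finset.mem_filter.mp this).1, (Finset.mem_filter.mp this).2⟩
  refine ⟨u, v, huD.1, hvD.1, huD.2, le_of_lt hvD.2, lt_of_le_of_lt huD.2 hvD.2, ?_⟩
  rw [Set.eq_empty_iff_forall_notMem]
  rintro w ⟨hwI, hwB⟩
  have hw1 : -1 ≤ w := le_trans (hDIcc u huD.1).1 (le_of_lt hwI.1)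
  have hw3 : w ≤ 3 := le_trans (le_of_lt hwI.2) (hDIcc v hvD.1).2
  have hwD : w ∈ D := hDB w hwB ⟨hw1, hw3⟩
  rcases le_or_gt w x with h | h
  · have : w ≤ u := by
      apply Finset.le_max'
      exact Finset.mem_filter.mpr ⟨hwD, h⟩
    linarith [hwI.1]
  · have : v ≤ w := by
      apply Finset.min'_le
      exact Finset.mem_filter.mpr ⟨hwD, h⟩
    linarith [hwI.2]

/-- global bound on the unit square -/
lemma global_square_bound (π πb : ℝ → ℝ) (hπc : Continuous π) (hπbc : Continuous πb)
    (hsub : ∀ x y : ℝ, π (x + y) ≤ π x + π y)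
    (B : Set ℝ) (hBc : IsClosed B)
    (hBd : ∀ x ∈ B, ∃ ε > (0 : ℝ), ∀ y ∈ B, |y - x| < ε → y = x)
    (hBa : ∀ x ∉ B, ∃ a b : ℝ, ∀ z ∈ connectedComponentIn Bᶜ x, π z = a * z + b)
    (lam : ℝ) (hlam : 0 < lam)
    (hGd : ∀ p z : ℝ × ℝ, slack π z = 0 → |slack πb p| ≤ lam * dist p z) :
    ∃ M : ℝ, 0 ≤ M ∧ ∀ p : ℝ × ℝ, p.1 ∈ Icc (0:ℝ) 1 → p.2 ∈ Icc (0:ℝ) 1 →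
      |slack πb p| ≤ M * slack π p := by
  classical
  have hF0 : ∀ p : ℝ × ℝ, 0 ≤ slack π p := by
    intro p
    have := hsub p.1 p.2
    simp only [slack]
    linarith
  set D : Finset ℝ := (finite_break B hBc hBd).toFinset ∪ {-1, 3} with hD
  have hDB : ∀ w ∈ B, w ∈ Icc (-1:ℝ) 3 → w ∈ D := by
    intro w hw hwI
    apply Finset.mem_union_left
    rw [Set.Finite.mem_toFinset]
    exact ⟨hw, hwI⟩
  have hD1 : (-1:ℝ) ∈ D := Finset.mem_union_right _ (by simp)
  have hD3 : (3:ℝ) ∈ D := Finset.mem_union_right _ (by simp)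
  have hDIcc : ∀ d ∈ D, (-1:ℝ) ≤ d ∧ d ≤ 3 := by
    intro d hd
    rcases Finset.mem_union.mp hd with h | h
    · rw [Set.Finite.mem_toFinset] at h
      exact ⟨h.2.1, h.2.2⟩
    · simp only [Finset.mem_insert, Finset.mem_singleton] at h
      rcases h with rfl | rfl <;> norm_num
  set GP : Finset (ℝ × ℝ) :=
    (D ×ˢ D).filter (fun g => g.1 < g.2 ∧ Ioo g.1 g.2 ∩ B = ∅) with hGP
  set J : Finset ((ℝ × ℝ) × (ℝ × ℝ) × (ℝ × ℝ)) := GP ×ˢ GP ×ˢ GP with hJ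
  have hcell : ∀ j ∈ J, ∃ M : ℝ, 0 ≤ M ∧
      ∀ p ∈ cell j.1.1 j.1.2 j.2.1.1 j.2.1.2 j.2.2.1 j.2.2.2,
        |slack πb p| ≤ M * slack π p := by
    rintro ⟨⟨u₁, v₁⟩, ⟨u₂, v₂⟩, ⟨u₃, v₃⟩⟩ hj
    simp only [hJ, Finset.mem_product] at hj
    obtain ⟨hj1, hj2, hj3⟩ := hj
    have hg1 := (Finset.mem_filter.mp hj1).2
    have hg2 := (Finset.mem_filter.mp hj2).2
    have hg3 := (Finset.mem_filter.mp hj3).2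
    obtain ⟨a₁, b₁, hab₁⟩ := affine_on_gap hπc B hBa u₁ v₁ hg1.1 hg1.2
    obtain ⟨a₂, b₂, hab₂⟩ := affine_on_gap hπc B hBa u₂ v₂ hg2.1 hg2.2
    obtain ⟨a₃, b₃, hab₃⟩ := affine_on_gap hπc B hBa u₃ v₃ hg3.1 hg3.2
    apply cell_bound (slack π) (slack πb) (slack_continuous hπc) (slack_continuous hπbc)
      hF0 lam hlam hGd u₁ v₁ u₂ v₂ u₃ v₃ (a₁ - a₃) (a₂ - a₃) (b₁ + b₂ - b₃)
    rintro p ⟨hc1, hc2, hc3, hc4, hc5, hc6⟩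
    have e1 := hab₁ p.1 ⟨hc1, hc2⟩
    have e2 := hab₂ p.2 ⟨hc3, hc4⟩
    have e3 := hab₃ (p.1 + p.2) ⟨hc5, hc6⟩
    simp only [slack]
    rw [e1, e2, e3]; ring
  choose! Mf hM0 hMb using hcell
  set Mtot : ℝ := ∑ j ∈ J, Mf j with hMtot
  have hMle : ∀ j ∈ J, Mf j ≤ Mtot :=
    fun j hj => Finset.single_le_sum (fun i hi => hM0 i hi) hj
  refine ⟨Mtot, Finset.sum_nonneg (fun i hi => hM0 i hi), fun p hp1 hp2 => ?_⟩
  obtain ⟨u₁, v₁, hu₁D, hv₁D, hu₁, hv₁, huv₁, hgap₁⟩ :=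
    gap_cover B D hDB hD1 hD3 hDIcc p.1 hp1.1 (by linarith [hp1.2])
  obtain ⟨u₂, v₂, hu₂D, hv₂D, hu₂, hv₂, huv₂, hgap₂⟩ :=
    gap_cover B D hDB hD1 hD3 hDIcc p.2 hp2.1 (by linarith [hp2.2])
  obtain ⟨u₃, v₃, hu₃D, hv₃D, hu₃, hv₃, huv₃, hgap₃⟩ :=
    gap_cover B D hDB hD1 hD3 hDIcc (p.1 + p.2) (by linarith [hp1.1, hp2.1])
      (by linarith [hp1.2, hp2.2])
  set j : (ℝ × ℝ) × (ℝ × ℝ) × (ℝ × ℝ) := ((u₁, v₁), (u₂, v₂), (u₃, v₃)) with hjdef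
  have hjJ : j ∈ J := by
    simp only [hJ, Finset.mem_product]
    refine ⟨?_, ?_, ?_⟩ <;>
      (apply Finset.mem_filter.mpr; constructor)
    · exact Finset.mem_product.mpr ⟨hu₁D, hv₁D⟩
    · exact ⟨huv₁, hgap₁⟩
    · exact Finset.mem_product.mpr ⟨hu₂D, hv₂D⟩
    · exact ⟨huv₂, hgap₂⟩
    · exact Finset.mem_product.mpr ⟨hu₃D, hv₃D⟩
    · exact ⟨huv₃, hgap₃⟩
  have hpc : p ∈ cell u₁ v₁ u₂ v₂ u₃ v₃ := ⟨hu₁, hv₁, hu₂, hv₂, hu₃, hv₃⟩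
  calc |slack πb p| ≤ Mf j * slack π p := hMb j hjJ p hpc
    _ ≤ Mtot * slack π p := mul_le_mul_of_nonneg_right (hMle j hjJ) (hF0 p)


lemma nonneg_of_subadd {g : ℝ → ℝ} (hc : Continuous g) (h0 : g 0 = 0)
    (hsub : ∀ x y : ℝ, g (x + y) ≤ g x + g y)
    (hper : ∀ (x : ℝ) (t : ℤ), g (x + t) = g x) : ∀ x, 0 ≤ g x := by
  obtain ⟨pm, _, hm⟩ := (isCompact_Icc (a := (0:ℝ)) (b := 1)).exists_isMinOn
    ⟨0, by norm_num⟩ hc.continuousOn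
  have hlow : ∀ z : ℝ, g pm ≤ g z := by
    intro z
    have h1 : g z = g (Int.fract z) := by
      have hz : z = Int.fract z + (⌊z⌋ : ℤ) := by
        rw [Int.fract]; push_cast; ring
      conv_lhs => rw [hz]
      exact hper _ _
    rw [h1]
    exact hm ⟨Int.fract_nonneg z, le_of_lt (Int.fract_lt_one z)⟩
  intro x
  by_contra hneg
  push_neg at hneg
  set c := -g x with hc'
  have hc0 : 0 < c := by simp only [hc']; linarith
  obtain ⟨n, hn⟩ := exists_nat_gt ((1 - g pm) / c)
  have hbound := pi_mul_nat h0 hsub x n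
  have hlz := hlow (x * n)
  have hgn : (n : ℝ) * g x = -(n * c) := by rw [hc']; ring
  rw [hgn] at hbound
  have : (1 - g pm) < n * c := by
    rw [div_lt_iff₀ hc0] at hn
    linarith
  linarith

lemma slack_fract {g : ℝ → ℝ} (hper : ∀ (x : ℝ) (t : ℤ), g (x + t) = g x) (p : ℝ × ℝ) :
    slack g p = slack g (Int.fract p.1, Int.fract p.2) := by
  have h1 : ∀ x : ℝ, g x = g (Int.fract x) := by
    intro x
    have hx : x = Int.fract x + (⌊x⌋ : ℤ) := by rw [Int.fract]; push_cast; ring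
    conv_lhs => rw [hx]
    rw [hper]
  have h2 : g (p.1 + p.2) = g (Int.fract p.1 + Int.fract p.2) := by
    have hx : p.1 + p.2 = (Int.fract p.1 + Int.fract p.2) + ((⌊p.1⌋ + ⌊p.2⌋ : ℤ) : ℝ) := by
      simp only [Int.fract]; push_cast; ring
    conv_lhs => rw [hx]
    rw [hper]
  simp only [slack]
  rw [← h1 p.1, ← h1 p.2, ← h2]

theorem stmt9 (f : ℝ) (hf : f ∈ Set.Ioo (0 : ℝ) 1) (π : ℝ → ℝ)
    (hπ : MinimalValid f π) (hcpl : ContPiecewiseLinear π)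
    (πb : ℝ → ℝ) (L : NNReal) (hlip : LipschitzWith L πb)
    (h0 : πb 0 = 0) (hfval : πb f = 0)
    (hadd : ∀ q ∈ Eset π, πb q.1 + πb q.2 = πb (q.1 + q.2))
    (hper : ∀ (x : ℝ) (t : ℤ), πb (x + (t : ℝ)) = πb x) :
    ∃ ε > (0 : ℝ), MinimalValid f (fun x => π x + ε * πb x) ∧
      MinimalValid f (fun x => π x - ε * πb x) := by
  obtain ⟨⟨B, hBc, hBd, hBa⟩, hπcont⟩ := hcpl
  have hnn := pi_nonneg hπ
  have h0π := pi_zero hπ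
  have hsubπ := pi_subadd hπ
  have hperπ := pi_periodic hπ
  have hsymπ := pi_symm hπ
  have hπf : π f = 1 := pi_f_eq hπ
  have hπbc : Continuous πb := hlip.continuous
  -- symmetry of the perturbation
  have hbsym : ∀ x : ℝ, πb x + πb (f - x) = 0 := by
    intro x
    have hE : ((x, f - x) : ℝ × ℝ) ∈ Eset π := by
      show π x + π (f - x) = π (x + (f - x))
      rw [show x + (f - x) = f by ring, hπf]
      exact hsymπ x
    have hs := hadd (x, f - x) hE
    simp only at hs
    rw [show x + (f - x) = f by ring, hfval] at hs
    linarith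
  have hF0 : ∀ p : ℝ × ℝ, 0 ≤ slack π p := by
    intro p
    have := hsubπ p.1 p.2
    simp only [slack]; linarith
  have hGzero : ∀ p : ℝ × ℝ, slack π p = 0 → slack πb p = 0 := by
    intro p hp
    have hE : ((p.1, p.2) : ℝ × ℝ) ∈ Eset π := by
      show π p.1 + π p.2 = π (p.1 + p.2)
      simp only [slack] at hp
      linarith
    have hs := hadd (p.1, p.2) hE
    simp only at hs
    simp only [slack]
    linarith
  set lam : ℝ := 4 * (L : ℝ) + 1 with hlamdef
  have hlam : 0 < lam := by positivity
  have hGlip : ∀ p q : ℝ × ℝ, |slack πb p - slack πb q| ≤ lam * dist p q := by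
    intro p q
    have hd1 : dist p.1 q.1 ≤ dist p q := by rw [Prod.dist_eq]; exact le_max_left _ _
    have hd2 : dist p.2 q.2 ≤ dist p q := by rw [Prod.dist_eq]; exact le_max_right _ _
    have hL0 : (0:ℝ) ≤ (L : ℝ) := L.coe_nonneg
    have e1 : |πb p.1 - πb q.1| ≤ (L : ℝ) * dist p q := by
      have := hlip.dist_le_mul p.1 q.1
      rw [Real.dist_eq] at this
      exact le_trans this (mul_le_mul_of_nonneg_left hd1 hL0)
    have e2 : |πb p.2 - πb q.2| ≤ (L : ℝ) * dist p q := by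
      have := hlip.dist_le_mul p.2 q.2
      rw [Real.dist_eq] at this
      exact le_trans this (mul_le_mul_of_nonneg_left hd2 hL0)
    have e3 : |πb (p.1 + p.2) - πb (q.1 + q.2)| ≤ 2 * (L : ℝ) * dist p q := by
      have h := hlip.dist_le_mul (p.1 + p.2) (q.1 + q.2)
      rw [Real.dist_eq] at h
      have hdd : dist (p.1 + p.2) (q.1 + q.2) ≤ dist p.1 q.1 + dist p.2 q.2 := by
        rw [Real.dist_eq, Real.dist_eq, Real.dist_eq]
        have : p.1 + p.2 - (q.1 + q.2) = (p.1 - q.1) + (p.2 - q.2) := by ring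
        rw [this]
        exact abs_add_le _ _
      calc |πb (p.1 + p.2) - πb (q.1 + q.2)| ≤ (L : ℝ) * dist (p.1 + p.2) (q.1 + q.2) := h
        _ ≤ (L : ℝ) * (dist p.1 q.1 + dist p.2 q.2) := mul_le_mul_of_nonneg_left hdd hL0
        _ ≤ (L : ℝ) * (dist p q + dist p q) := by
            apply mul_le_mul_of_nonneg_left (add_le_add hd1 hd2) hL0
        _ = 2 * (L : ℝ) * dist p q := by ring
    have h3 : slack πb p - slack πb q
        = (πb p.1 - πb q.1) + (πb p.2 - πb q.2) - (πb (p.1 + p.2) - πb (q.1 + q.2)) := by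
      simp only [slack]; ring
    have hdnn : 0 ≤ dist p q := dist_nonneg
    rw [h3, abs_le]
    constructor <;>
      [ (have l1 := neg_abs_le (πb p.1 - πb q.1)
         have l2 := neg_abs_le (πb p.2 - πb q.2)
         have l3 := le_abs_self (πb (p.1 + p.2) - πb (q.1 + q.2))
         simp only [hlamdef]
         nlinarith) ;
        (have l1 := le_abs_self (πb p.1 - πb q.1)
         have l2 := le_abs_self (πb p.2 - πb q.2)
         have l3 := neg_abs_le (πb (p.1 + p.2) - πb (q.1 + q.2))
         simp only [hlamdef]
         nlinarith) ]
  have hGd : ∀ p z : ℝ × ℝ, slack π z = 0 → |slack πb p| ≤ lam * dist p z := by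
    intro p z hz
    have h0' := hGzero z hz
    have := hGlip p z
    rwa [h0', sub_zero] at this
  obtain ⟨M, hM0, hMb⟩ := global_square_bound π πb hπcont hπbc hsubπ B hBc hBd hBa lam hlam hGd
  have hGF : ∀ p : ℝ × ℝ, |slack πb p| ≤ M * slack π p := by
    intro p
    rw [slack_fract hper p, slack_fract hperπ p]
    apply hMb
    · exact ⟨Int.fract_nonneg _, le_of_lt (Int.fract_lt_one _)⟩
    · exact ⟨Int.fract_nonneg _, le_of_lt (Int.fract_lt_one _)⟩
  set ε : ℝ := 1 / (M + 1) with hεdef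
  have hε : 0 < ε := by positivity
  have key : ∀ e : ℝ, |e| ≤ ε → MinimalValid f (fun x => π x + e * πb x) := by
    intro e he
    have hgc : Continuous (fun x => π x + e * πb x) :=
      hπcont.add (continuous_const.mul hπbc)
    have hg0 : π 0 + e * πb 0 = 0 := by rw [h0π, h0]; ring
    have hgsub : ∀ x y : ℝ, (π (x+y) + e * πb (x+y)) ≤ (π x + e * πb x) + (π y + e * πb y) := by
      intro x y
      have h1 : |slack πb (x, y)| ≤ M * slack π (x, y) := hGF (x, y)
      have h2 : |e * slack πb (x, y)| ≤ ε * (M * slack π (x, y)) := by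
        rw [abs_mul]
        apply mul_le_mul he h1 (abs_nonneg _) (le_of_lt hε)
      have h4 : ε * (M * slack π (x, y)) ≤ slack π (x, y) := by
        have hFnn := hF0 (x, y)
        have hεM : ε * M ≤ 1 := by
          rw [hεdef, div_mul_eq_mul_div, div_le_one (by linarith)]
          linarith
        calc ε * (M * slack π (x, y)) = (ε * M) * slack π (x, y) := by ring
          _ ≤ 1 * slack π (x, y) := mul_le_mul_of_nonneg_right hεM hFnn
          _ = slack π (x, y) := one_mul _
      have h5 : -(e * slack πb (x, y)) ≤ slack π (x, y) :=
        le_trans (le_trans (neg_le_abs _) h2) h4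
      simp only [slack] at h5
      linarith
    have hgper : ∀ (x : ℝ) (t : ℤ), (π (x + t) + e * πb (x + t)) = π x + e * πb x := by
      intro x t
      rw [hperπ x t, hper x t]
    have hgsym : ∀ x : ℝ, (π x + e * πb x) + (π (f - x) + e * πb (f - x)) = 1 := by
      intro x
      have h1 := hbsym x
      have h2 := hsymπ x
      linear_combination h2 + e * h1
    have hgnn : ∀ x, 0 ≤ π x + e * πb x :=
      nonneg_of_subadd hgc hg0 hgsub hgper
    exact minimalValid_of hgnn hg0 hgsub hgper hgsym
  refine ⟨ε, hε, ?_, ?_⟩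
  · exact key ε (by rw [abs_of_pos hε])
  · have h := key (-ε) (by rw [abs_neg, abs_of_pos hε])
    have heq : (fun x => π x + (-ε) * πb x) = (fun x => π x - ε * πb x) := by
      funext x; ring
    rwa [heq] at h

end GeomSec
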